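/- Fix M ≥ 1, a solvent volume v₀ > 0, ionic volumes v_j > 0, valences z_j ∈ ℝ, constants β > 0 and e > 0, and bulk concentrations c_j^∞ > 0 (j = 1,…,M) with Σ_{j=1}^M v_j c_j^∞ < 1; set γ^∞ = 1 − Σ_{j=1}^M v_j c_j^∞. For every ψ ∈ ℝ, the function f(γ) = γ − 1 + Σ_{j=1}^M v_j c_j^∞ (γ/γ^∞)^{v_j/v₀} exp(−β z_j e ψ) has exactly one root γ in the open interval (0, 1). -/
import Mathlib


open scoped BigOperators

/-- For every `ψ : ℝ`, the function
`f(γ) = γ − 1 + ∑ j, v j * c∞ j * (γ/γ∞)^(v j / v₀) * exp(−β z_j e ψ)`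
has exactly one root `γ` in the open interval `(0, 1)`. -/
theorem unique_root_solvent_fraction
    (M : ℕ) (hM : 1 ≤ M) (v₀ : ℝ) (hv₀ : 0 < v₀)
    (v z cinf : Fin M → ℝ) (hv : ∀ j, 0 < v j)
    (β e : ℝ) (hβ : 0 < β) (he : 0 < e)
    (hcinf : ∀ j, 0 < cinf j) (hsum : ∑ j, v j * cinf j < 1) (ψ : ℝ) :
    ∃! γ : ℝ, γ ∈ Set.Ioo (0 : ℝ) 1 ∧
      γ - 1 + ∑ j, v j * cinf j * (γ / (1 - ∑ i, v i * cinf i)) ^ (v j / v₀) *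
        Real.exp (-(β * z j * e * ψ)) = 0 := by
  set gb : ℝ := 1 - ∑ i, v i * cinf i with hgb
  have hgbpos : 0 < gb := by simp [hgb]; linarith
  set f : ℝ → ℝ := fun γ => γ - 1 + ∑ j, v j * cinf j * (γ / gb) ^ (v j / v₀) *
      Real.exp (-(β * z j * e * ψ)) with hf
  have hp : ∀ j : Fin M, 0 < v j / v₀ := fun j => div_pos (hv j) hv₀
  have hcont : Continuous f := by
    apply (continuous_id.sub continuous_const).add
    apply continuous_finset_sum
    intro j _
    apply Continuous.mul _ continuous_const
    apply Continuous.mul continuous_const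
    exact (Real.continuous_rpow_const (hp j).le).comp
      (continuous_id.div_const gb)
  have hmono : StrictMonoOn f (Set.Icc (0 : ℝ) 1) := by
    intro a ha b hb hab
    have hsum_le : (∑ j, v j * cinf j * (a / gb) ^ (v j / v₀) * Real.exp (-(β * z j * e * ψ)))
        ≤ ∑ j, v j * cinf j * (b / gb) ^ (v j / v₀) * Real.exp (-(β * z j * e * ψ)) := by
      apply Finset.sum_le_sum
      intro j _
      apply mul_le_mul_of_nonneg_right _ (Real.exp_pos _).le
      apply mul_le_mul_of_nonneg_left _
        (mul_nonneg (hv j).le (hcinf j).le)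
      apply Real.rpow_le_rpow (div_nonneg ha.1 hgbpos.le) _ (hp j).le
      gcongr
    simp only [hf]
    have : a - 1 < b - 1 := by linarith
    linarith
  have hf0 : f 0 = -1 := by
    simp only [hf]
    rw [show ((0:ℝ) / gb) = 0 by simp]
    have : ∀ j ∈ Finset.univ, v j * cinf j * (0:ℝ) ^ (v j / v₀) *
        Real.exp (-(β * z j * e * ψ)) = 0 := by
      intro j _
      rw [Real.zero_rpow (hp j).ne']
      ring
    rw [Finset.sum_congr rfl this]
    simp
  have hf1 : 0 < f 1 := by
    simp only [hf]
    have : (0:ℝ) < ∑ j, v j * cinf j * ((1:ℝ) / gb) ^ (v j / v₀) *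
        Real.exp (-(β * z j * e * ψ)) := by
      apply Finset.sum_pos
      · intro j _
        have h1 : (0:ℝ) < ((1:ℝ)/gb) ^ (v j / v₀) :=
          Real.rpow_pos_of_pos (by positivity) _
        have := hv j; have := hcinf j
        positivity
      · exact ⟨⟨0, hM⟩, Finset.mem_univ _⟩
    linarith
  have hsub : Set.Ioo (f 0) (f 1) ⊆ f '' Set.Ioo 0 1 :=
    intermediate_value_Ioo (by norm_num) hcont.continuousOn
  have h0mem : (0:ℝ) ∈ Set.Ioo (f 0) (f 1) := by
    rw [hf0]; exact ⟨by norm_num, hf1⟩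
  obtain ⟨γ, hγmem, hγeq⟩ := hsub h0mem
  refine ⟨γ, ⟨hγmem, hγeq⟩, ?_⟩
  rintro γ' ⟨hγ'mem, hγ'eq⟩
  have hinj := hmono.injOn
  apply hinj (Set.Ioo_subset_Icc_self hγ'mem) (Set.Ioo_subset_Icc_self hγmem)
  show f γ' = f γ
  rw [hγeq]
  exact hγ'eq
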